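/- Let q ≥ 1 be an integer and c₀, x, u real constants. Define G_n(x) = √(32 log n)/n + ((3q-8)/(2q))·log(2 log n)/(n√(2 log n)) + 4x/(n√(2 log n)) and α_n = (1 + u/log n)·G_n(x)/2. Then, as n → ∞: exp(-n²α_n²/8 - (1/4)·log(n·α_n/2) + c₀) · n · (2 log n)^{1/2 - 1/q} → e^{c₀ - x - 2u}. -/

import Mathlib

open Real Filter Topology

noncomputable def gL (n : ℕ) : ℝ := Real.log n

noncomputable def gS (n : ℕ) : ℝ := Real.log (2 * Real.log n)

noncomputable def gT (q : ℕ) (x : ℝ) (n : ℕ) : ℝ :=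
  ((3 * (q:ℝ) - 8) / (2 * (q:ℝ)) * gS n + 4 * x) / (4 * gL n)

lemma gL_atTop : Tendsto gL atTop atTop :=
  Real.tendsto_log_atTop.comp tendsto_natCast_atTop_atTop

lemma gL_inv : Tendsto (fun n => (gL n)⁻¹) atTop (𝓝 0) :=
  gL_atTop.inv_tendsto_atTop

lemma gS_div_gL : Tendsto (fun n => gS n / gL n) atTop (𝓝 0) := by
  have hg2 : Tendsto (fun y : ℝ => Real.log (2 * y) / y) atTop (𝓝 0) := by
    have hlogy : Tendsto (fun y : ℝ => Real.log y / y) atTop (𝓝 0) := by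
      simpa using Real.tendsto_pow_log_div_mul_add_atTop 1 0 1 one_ne_zero
    have h : Tendsto (fun y : ℝ => Real.log 2 * y⁻¹ + Real.log y / y) atTop (𝓝 0) := by
      simpa using (tendsto_inv_atTop_zero.const_mul (Real.log 2)).add hlogy
    refine h.congr' ?_
    filter_upwards [eventually_gt_atTop (0:ℝ)] with y hy
    rw [Real.log_mul two_ne_zero hy.ne']
    ring
  exact hg2.comp gL_atTop

lemma gS_sq_div_gL : Tendsto (fun n => (gS n) ^ 2 / gL n) atTop (𝓝 0) := by
  have hg3 : Tendsto (fun y : ℝ => (Real.log (2 * y)) ^ 2 / y) atTop (𝓝 0) := by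
    have hlogy2 : Tendsto (fun y : ℝ => (Real.log y) ^ 2 / y) atTop (𝓝 0) := by
      simpa using Real.tendsto_pow_log_div_mul_add_atTop 1 0 2 one_ne_zero
    have hlogy : Tendsto (fun y : ℝ => Real.log y / y) atTop (𝓝 0) := by
      simpa using Real.tendsto_pow_log_div_mul_add_atTop 1 0 1 one_ne_zero
    have h : Tendsto (fun y : ℝ => (Real.log 2) ^ 2 * y⁻¹
        + (2 * Real.log 2) * (Real.log y / y) + (Real.log y) ^ 2 / y) atTop (𝓝 0) := by
      simpa using ((tendsto_inv_atTop_zero.const_mul ((Real.log 2) ^ 2)).add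
        (hlogy.const_mul (2 * Real.log 2))).add hlogy2
    refine h.congr' ?_
    filter_upwards [eventually_gt_atTop (0:ℝ)] with y hy
    rw [Real.log_mul two_ne_zero hy.ne']
    ring
  exact hg3.comp gL_atTop

lemma gT_tendsto (q : ℕ) (hq : 1 ≤ q) (x : ℝ) : Tendsto (gT q x) atTop (𝓝 0) := by
  have hq0 : (q:ℝ) ≠ 0 := Nat.cast_ne_zero.mpr (by omega)
  have h : Tendsto (fun n => ((3 * (q:ℝ) - 8) / (2 * (q:ℝ)) / 4) * (gS n / gL n)
      + x * (gL n)⁻¹) atTop (𝓝 0) := by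
    simpa using (gS_div_gL.const_mul ((3 * (q:ℝ) - 8) / (2 * (q:ℝ)) / 4)).add
      (gL_inv.const_mul x)
  refine h.congr' ?_
  filter_upwards [gL_atTop.eventually_gt_atTop 0] with n hn
  unfold gT
  field_simp

lemma gap_key (q : ℕ) (hq : 1 ≤ q) (c₀ x u : ℝ) :
    Tendsto (fun n =>
      -((1 + u / gL n) ^ 2 * (2 * gL n) * (2 + gT q x n) ^ 2 / 8)
      - (1 / 4) * (Real.log (1 + u / gL n) + gS n / 2 + Real.log (1 + gT q x n / 2))
      + c₀ + gL n + ((1:ℝ) / 2 - 1 / (q:ℝ)) * gS n) atTop (𝓝 (c₀ - x - 2 * u)) := by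
  have hq0 : (q:ℝ) ≠ 0 := Nat.cast_ne_zero.mpr (by omega)
  have ht := gT_tendsto q hq x
  have hu1 : Tendsto (fun n => 1 + u * (gL n)⁻¹) atTop (𝓝 1) := by
    simpa using (tendsto_const_nhds (x := (1:ℝ)) (f := atTop)).add (gL_inv.const_mul u)
  have hlogu : Tendsto (fun n => Real.log (1 + u * (gL n)⁻¹)) atTop (𝓝 0) := by
    have := (Real.continuousAt_log one_ne_zero).tendsto.comp hu1
    simpa [Function.comp_def] using this
  have ht1 : Tendsto (fun n => 1 + gT q x n / 2) atTop (𝓝 1) := by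
    simpa using (tendsto_const_nhds (x := (1:ℝ)) (f := atTop)).add (ht.div_const 2)
  have hlogt : Tendsto (fun n => Real.log (1 + gT q x n / 2)) atTop (𝓝 0) := by
    have := (Real.continuousAt_log one_ne_zero).tendsto.comp ht1
    simpa [Function.comp_def] using this
  have hErr : Tendsto (fun n =>
      c₀ - x - 2 * u
      - (((3 * (q:ℝ) - 8) / (2 * (q:ℝ)) / 4) ^ 2 * ((gS n) ^ 2 / gL n)
          + ((3 * (q:ℝ) - 8) / (2 * (q:ℝ)) / 2 * x) * (gS n / gL n)
          + x ^ 2 * (gL n)⁻¹) / 4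
      - (2 * u) * gT q x n
      - u * (gT q x n * gT q x n) / 2
      - u ^ 2 * (gL n)⁻¹
      - u ^ 2 * (gT q x n * (gL n)⁻¹)
      - u ^ 2 * (gT q x n * gT q x n * (gL n)⁻¹) / 4
      - (1 / 4) * Real.log (1 + u * (gL n)⁻¹)
      - (1 / 4) * Real.log (1 + gT q x n / 2)) atTop (𝓝 (c₀ - x - 2 * u)) := by
    have := (tendsto_const_nhds (x := c₀ - x - 2 * u) (f := atTop))
      |>.sub ((((gS_sq_div_gL.const_mul (((3 * (q:ℝ) - 8) / (2 * (q:ℝ)) / 4) ^ 2)).add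
        (gS_div_gL.const_mul ((3 * (q:ℝ) - 8) / (2 * (q:ℝ)) / 2 * x))).add
        (gL_inv.const_mul (x ^ 2))).div_const 4)
      |>.sub (ht.const_mul (2 * u))
      |>.sub (((ht.mul ht).const_mul u).div_const 2)
      |>.sub (gL_inv.const_mul (u ^ 2))
      |>.sub ((ht.mul gL_inv).const_mul (u ^ 2))
      |>.sub ((((ht.mul ht).mul gL_inv).const_mul (u ^ 2)).div_const 4)
      |>.sub (hlogu.const_mul (1 / 4))
      |>.sub (hlogt.const_mul (1 / 4))
    simpa using this
  refine hErr.congr' ?_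
  filter_upwards [gL_atTop.eventually_gt_atTop 0] with n hn
  have hL0 : gL n ≠ 0 := hn.ne'
  have htn : gT q x n = ((3 * (q:ℝ) - 8) / (2 * (q:ℝ)) * gS n + 4 * x) / (4 * gL n) := rfl
  have hdiv : u * (gL n)⁻¹ = u / gL n := (div_eq_mul_inv u (gL n)).symm
  rw [hdiv, htn]
  field_simp
  ring

theorem gap_scaling_asymptotics
    (q : ℕ) (hq : 1 ≤ q) (c₀ x u : ℝ) (G α : ℕ → ℝ)
    (hG : ∀ n : ℕ, G n = Real.sqrt (32 * Real.log n) / n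
        + ((3 * (q:ℝ) - 8) / (2 * q)) * Real.log (2 * Real.log n) / (n * Real.sqrt (2 * Real.log n))
        + 4 * x / (n * Real.sqrt (2 * Real.log n)))
    (hα : ∀ n : ℕ, α n = (1 + u / Real.log n) * G n / 2) :
    Filter.Tendsto
      (fun n : ℕ =>
        Real.exp (-(n:ℝ) ^ 2 * (α n) ^ 2 / 8 - (1 / 4) * Real.log ((n:ℝ) * α n / 2) + c₀)
          * (n:ℝ) * (2 * Real.log n) ^ ((1:ℝ) / 2 - 1 / q))
      Filter.atTop (𝓝 (Real.exp (c₀ - x - 2 * u))) := by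
  have hq0 : (q:ℝ) ≠ 0 := Nat.cast_ne_zero.mpr (by omega)
  have hkey := gap_key q hq c₀ x u
  have hexp := Real.continuous_exp.continuousAt.tendsto.comp hkey
  refine hexp.congr' ?_
  have huT : Tendsto (fun n : ℕ => 1 + u / Real.log n) atTop (𝓝 1) := by
    have := (tendsto_const_nhds (x := (1:ℝ)) (f := atTop)).add (gL_inv.const_mul u)
    simpa [gL, div_eq_mul_inv] using this
  have ht1 : Tendsto (fun n => 1 + gT q x n / 2) atTop (𝓝 1) := by
    simpa using (tendsto_const_nhds (x := (1:ℝ)) (f := atTop)).add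
      ((gT_tendsto q hq x).div_const 2)
  filter_upwards [huT.eventually (eventually_gt_nhds zero_lt_one),
    ht1.eventually (eventually_gt_nhds zero_lt_one),
    gL_atTop.eventually_gt_atTop 0, eventually_ge_atTop 1] with n hupos htpos hLpos hn1
  have hLpos' : (0:ℝ) < Real.log n := hLpos
  have h2L : (0:ℝ) < 2 * Real.log n := by linarith
  have hnpos : (0:ℝ) < (n:ℝ) := by exact_mod_cast Nat.lt_of_lt_of_le Nat.zero_lt_one hn1
  have hSpos : 0 < Real.sqrt (2 * Real.log n) := Real.sqrt_pos.mpr h2L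
  have hnα : (n:ℝ) * α n
      = (1 + u / Real.log n) * Real.sqrt (2 * Real.log n) * (2 + gT q x n) := by
    rw [hα n, hG n]
    have h32 : Real.sqrt (32 * Real.log n) = 4 * Real.sqrt (2 * Real.log n) := by
      rw [show (32:ℝ) * Real.log n = 16 * (2 * Real.log n) by ring,
        Real.sqrt_mul (by norm_num : (0:ℝ) ≤ 16),
        show Real.sqrt 16 = 4 by
          rw [show (16:ℝ) = 4 ^ 2 by norm_num, Real.sqrt_sq (by norm_num : (0:ℝ) ≤ 4)]]
    rw [h32]
    have htn : gT q x n
        = ((3 * (q:ℝ) - 8) / (2 * (q:ℝ)) * Real.log (2 * Real.log n) + 4 * x)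
          / (4 * Real.log n) := rfl
    rw [htn]
    have hv2 : Real.sqrt (2 * Real.log n) ^ 2 = 2 * Real.log n := Real.sq_sqrt h2L.le
    set v := Real.sqrt (2 * Real.log n) with hv
    have hLval : Real.log (n:ℝ) = v ^ 2 / 2 := by rw [hv2]; ring
    rw [hLval]
    have hv0 : v ≠ 0 := hSpos.ne'
    field_simp
    ring
  have hsq : ((n:ℝ)) ^ 2 * (α n) ^ 2
      = (1 + u / Real.log n) ^ 2 * (2 * Real.log n) * (2 + gT q x n) ^ 2 := by
    calc ((n:ℝ)) ^ 2 * (α n) ^ 2 = ((n:ℝ) * α n) ^ 2 := by ring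
      _ = ((1 + u / Real.log n) * Real.sqrt (2 * Real.log n) * (2 + gT q x n)) ^ 2 := by
          rw [hnα]
      _ = (1 + u / Real.log n) ^ 2 * (Real.sqrt (2 * Real.log n)) ^ 2
            * (2 + gT q x n) ^ 2 := by ring
      _ = (1 + u / Real.log n) ^ 2 * (2 * Real.log n) * (2 + gT q x n) ^ 2 := by
          rw [Real.sq_sqrt h2L.le]
  have hlogval : Real.log ((n:ℝ) * α n / 2)
      = Real.log (1 + u / Real.log n) + Real.log (2 * Real.log n) / 2
        + Real.log (1 + gT q x n / 2) := by
    rw [show (n:ℝ) * α n / 2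
        = (1 + u / Real.log n) * (Real.sqrt (2 * Real.log n) * (1 + gT q x n / 2)) by
          rw [hnα]; ring,
      Real.log_mul hupos.ne' (mul_pos hSpos htpos).ne',
      Real.log_mul hSpos.ne' htpos.ne', Real.log_sqrt h2L.le]
    ring
  show Real.exp _ = _
  simp only [Function.comp_apply, gL, gS]
  rw [Real.rpow_def_of_pos h2L]
  rw [show
      -((1 + u / Real.log n) ^ 2 * (2 * Real.log n) * (2 + gT q x n) ^ 2 / 8)
      - (1 / 4) * (Real.log (1 + u / Real.log n) + Real.log (2 * Real.log n) / 2
          + Real.log (1 + gT q x n / 2))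
      + c₀ + Real.log n + ((1:ℝ) / 2 - 1 / (q:ℝ)) * Real.log (2 * Real.log n)
      = (-(n:ℝ) ^ 2 * (α n) ^ 2 / 8 - (1 / 4) * Real.log ((n:ℝ) * α n / 2) + c₀)
        + Real.log n + Real.log (2 * Real.log n) * ((1:ℝ) / 2 - 1 / (q:ℝ)) by
      rw [hlogval]
      linear_combination ((1:ℝ) / 8) * hsq]
  rw [Real.exp_add, Real.exp_add, Real.exp_log hnpos]
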